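/- Let q be a prime number and identify the index set {0, …, q−1} with the finite field 𝔽_q. Let c ∈ 𝔽_q^q be a tuple whose distinct values c₁, …, c_k occur with multiplicities l₁, …, l_k (so l₁ + ⋯ + l_k = q), and suppose c_0 + c_1 + ⋯ + c_{q−1} ≠ 0 in 𝔽_q. Then for every λ ∈ 𝔽_q, the number of anagrams d of c with Σ̃(d) = λ equals (q−1)! / (l₁! ⋯ l_k!), i.e. |An^λ(c)| = (q−1)!/(l₁!⋯l_k!). -/

import Mathlib

/-- The set of anagrams of a tuple `c ∈ 𝔽_q^q` (indexed by `𝔽_q = ZMod q`): all tuples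
obtained from `c` by permuting the entries. -/
def anagrams (q : ℕ) [NeZero q] (c : ZMod q → ZMod q) : Finset (ZMod q → ZMod q) :=
  Finset.univ.filter (fun d => ∃ σ : Equiv.Perm (ZMod q), d = c ∘ σ)

/-- `An^λ(c)`: the anagrams `d` of `c` with weighted sum `Σ̃(d) = Σ_{i ∈ 𝔽_q} i·d_i = λ`. -/
def anagramsLevel (q : ℕ) [NeZero q] (c : ZMod q → ZMod q) (lam : ZMod q) :
    Finset (ZMod q → ZMod q) :=
  (anagrams q c).filter (fun d => ∑ i : ZMod q, i * d i = lam)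

/-- The multiplicity with which the value `a ∈ 𝔽_q` occurs in the tuple `c ∈ 𝔽_q^q`. -/
def multiplicityOf (q : ℕ) [NeZero q] (c : ZMod q → ZMod q) (a : ZMod q) : ℕ :=
  (Finset.univ.filter (fun i : ZMod q => c i = a)).card

open Finset Equiv

lemma sum_of_mem_anagrams {q : ℕ} [NeZero q] {c d : ZMod q → ZMod q}
    (hd : d ∈ anagrams q c) : ∑ i : ZMod q, d i = ∑ i : ZMod q, c i := by
  simp only [anagrams, mem_filter] at hd
  obtain ⟨-, σ, rfl⟩ := hd
  exact Equiv.sum_comp σ c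

lemma anagrams_card_mul {q : ℕ} [NeZero q] (c : ZMod q → ZMod q) :
    (anagrams q c).card * ∏ a : ZMod q, Nat.factorial (multiplicityOf q c a) =
      Nat.factorial q := by
  classical
  have hfact : (Finset.univ : Finset (Equiv.Perm (ZMod q))).card = Nat.factorial q := by
    rw [Finset.card_univ, Fintype.card_perm, ZMod.card]
  have key : (Finset.univ : Finset (Equiv.Perm (ZMod q))).card =
      ∑ d ∈ anagrams q c, (Finset.univ.filter (fun σ : Equiv.Perm (ZMod q) => c ∘ σ = d)).card := by
    apply Finset.card_eq_sum_card_fiberwise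
    intro σ _
    simp only [anagrams, mem_filter, mem_univ, true_and]
    exact (Finset.mem_filter.mpr ⟨Finset.mem_univ _, σ, rfl⟩ : c ∘ σ ∈ anagrams q c)
  have hstab : (Finset.univ.filter (fun σ : Equiv.Perm (ZMod q) => c ∘ σ = c)).card =
      ∏ a : ZMod q, Nat.factorial (multiplicityOf q c a) := by
    rw [← Fintype.card_subtype]
    rw [DomMulAct.stabilizer_card c]
    refine Finset.prod_congr rfl fun a _ => ?_
    rw [Fintype.card_subtype]
    rfl
  have hfiber : ∀ d ∈ anagrams q c,
      (Finset.univ.filter (fun σ : Equiv.Perm (ZMod q) => c ∘ σ = d)).card =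
      ∏ a : ZMod q, Nat.factorial (multiplicityOf q c a) := by
    intro d hd
    simp only [anagrams, mem_filter] at hd
    obtain ⟨-, σ₀, rfl⟩ := hd
    rw [← hstab]
    apply Finset.card_bij' (fun σ _ => σ * σ₀⁻¹) (fun σ _ => σ * σ₀)
    · intro σ hσ
      simp only [mem_filter, mem_univ, true_and] at hσ ⊢
      funext i
      simpa using congrFun hσ (σ₀⁻¹ i)
    · intro σ hσ
      simp only [mem_filter, mem_univ, true_and] at hσ ⊢
      funext i
      simpa using congrFun hσ (σ₀ i)
    · intro σ _; group
    · intro σ _; group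
  rw [← hfact, key, Finset.sum_congr rfl hfiber, Finset.sum_const, smul_eq_mul]

lemma shift_mem_level {q : ℕ} [NeZero q] {c d : ZMod q → ZMod q} {lam : ZMod q}
    (hd : d ∈ anagramsLevel q c lam) (t : ZMod q) :
    (fun i => d (i + t)) ∈ anagramsLevel q c (lam - t * ∑ i : ZMod q, c i) := by
  simp only [anagramsLevel, mem_filter] at hd ⊢
  obtain ⟨hd, hsum⟩ := hd
  have hS : ∑ i : ZMod q, d i = ∑ i : ZMod q, c i := sum_of_mem_anagrams hd
  constructor
  · simp only [anagrams, mem_filter, mem_univ, true_and] at hd ⊢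
    obtain ⟨σ, rfl⟩ := hd
    exact ⟨σ * Equiv.addRight t, rfl⟩
  · have h1 : ∑ i : ZMod q, i * d (i + t) = ∑ j : ZMod q, (j - t) * d j := by
      apply Fintype.sum_equiv (Equiv.addRight t)
      intro i
      simp
    rw [h1]
    simp only [sub_mul, Finset.sum_sub_distrib, hsum, ← Finset.mul_sum, hS]

lemma level_card_eq {q : ℕ} [Fact q.Prime] {c : ZMod q → ZMod q}
    (hc : (∑ i : ZMod q, c i) ≠ 0) (lam lam' : ZMod q) :
    (anagramsLevel q c lam).card = (anagramsLevel q c lam').card := by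
  set S := ∑ i : ZMod q, c i
  set t : ZMod q := (lam - lam') * S⁻¹ with ht
  have htS : t * S = lam - lam' := by
    rw [ht, mul_assoc, inv_mul_cancel₀ hc, mul_one]
  have h1 : lam - t * S = lam' := by rw [htS]; ring
  have h2 : lam' - (-t) * S = lam := by rw [neg_mul, htS]; ring
  apply Finset.card_bij' (fun d _ => fun i => d (i + t)) (fun d _ => fun i => d (i + (-t)))
  · intro d hd; rw [← h1]; exact shift_mem_level hd t
  · intro d hd; rw [← h2]; exact shift_mem_level hd (-t)
  · intro d _; funext i; simp
  · intro d _; funext i; simp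

/-- For a prime `q` and a tuple `c ∈ 𝔽_q^q` whose distinct values occur with multiplicities
`l₁, …, l_k` and whose entries sum to a nonzero element of `𝔽_q`, for every `λ ∈ 𝔽_q` one has
`|An^λ(c)| = (q−1)!/(l₁!⋯l_k!)`, stated here in the form
`|An^λ(c)| · l₁!⋯l_k! = (q−1)!`. -/
theorem anagramsLevel_card_of_sum_ne_zero (q : ℕ) [Fact q.Prime]
    (c : ZMod q → ZMod q) (hc : (∑ i : ZMod q, c i) ≠ 0) (lam : ZMod q) :
    (anagramsLevel q c lam).card * ∏ a : ZMod q, Nat.factorial (multiplicityOf q c a) = Nat.factorial (q - 1) := by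
  have hq : 0 < q := (Fact.out : q.Prime).pos
  have hpart : (anagrams q c).card = ∑ b : ZMod q, (anagramsLevel q c b).card :=
    Finset.card_eq_sum_card_fiberwise (fun d _ => Finset.mem_univ _)
  have hconst : ∀ b : ZMod q, (anagramsLevel q c b).card = (anagramsLevel q c lam).card :=
    fun b => level_card_eq hc b lam
  have hA : (anagrams q c).card = q * (anagramsLevel q c lam).card := by
    rw [hpart, Finset.sum_congr rfl (fun b _ => hconst b), Finset.sum_const, smul_eq_mul,
      Finset.card_univ, ZMod.card]
  have key := anagrams_card_mul c
  rw [hA, mul_assoc] at key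
  have hq' : q * Nat.factorial (q - 1) = Nat.factorial q := by
    rw [← Nat.succ_pred_eq_of_pos hq]; simp [Nat.factorial_succ]
  apply Nat.eq_of_mul_eq_mul_left hq
  rw [key, hq']
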